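/- For all integers n, k, d with n ≥ k > d ≥ 1, the maximum number of intersecting pairs in a family of n axis-parallel boxes in ℝ^d such that no k+1 of the boxes have a point in common equals t(n-k+d, d) + (C(n,2) - C(n-k+d, 2)). That is, this value is an upper bound for the number of intersecting pairs of every such family, and it is attained by some such family. -/

import Mathlib

/-- Number of edges of the Turán graph `𝒯(n, m)`, the complete `m`-partite graph on `n`
vertices whose vertex-class sizes are as equal as possible. -/
noncomputable def turanEdges (n m : ℕ) : ℕ :=
  (SimpleGraph.turanGraph n m).edgeFinset.card

/-- `S ⊆ ℝ^d` is an axis-parallel box: a product `∏ᵢ [aᵢ, bᵢ]` with `aᵢ ≤ bᵢ`. -/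
def IsBox {d : ℕ} (S : Set (Fin d → ℝ)) : Prop :=
  ∃ a b : Fin d → ℝ, (∀ i, a i ≤ b i) ∧
    S = Set.pi Set.univ (fun i => Set.Icc (a i) (b i))

/-- Number of intersecting pairs of an indexed family of sets: the number of unordered
pairs `{i, j}` with `i ≠ j` and `B i ∩ B j ≠ ∅`. -/
noncomputable def interPairs {n : ℕ} {α : Type*} (B : Fin n → Set α) : ℕ :=
  Set.ncard {p : Fin n × Fin n | p.1 < p.2 ∧ (B p.1 ∩ B p.2).Nonempty}

open Finset

namespace BoxProof

noncomputable section

/-! ### Classical filter -/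

noncomputable def cfilter {α : Type*} (p : α → Prop) (s : Finset α) : Finset α :=
  @Finset.filter α p (fun a => Classical.propDecidable (p a)) s

@[simp] lemma mem_cfilter {α : Type*} {p : α → Prop} {s : Finset α} {a : α} :
    a ∈ cfilter p s ↔ a ∈ s ∧ p a :=
  @Finset.mem_filter α p (fun a => Classical.propDecidable (p a)) s a

lemma cfilter_eq_filter {α : Type*} (p : α → Prop) [DecidablePred p] (s : Finset α) :
    cfilter p s = s.filter p :=
  Finset.filter_congr_decidable s p (fun a => Classical.propDecidable (p a))

lemma cfilter_subset {α : Type*} (p : α → Prop) (s : Finset α) : cfilter p s ⊆ s :=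
  @Finset.filter_subset α p (fun a => Classical.propDecidable (p a)) s

lemma cfilter_card_add {α : Type*} (p : α → Prop) (s : Finset α) :
    (cfilter p s).card + (cfilter (fun a => ¬ p a) s).card = s.card :=
  by classical
     convert Finset.card_filter_add_card_filter_not (s := s) p <;> exact cfilter_eq_filter _ _

lemma cfilter_congr {α : Type*} {p q : α → Prop} (s : Finset α) (h : ∀ a ∈ s, p a ↔ q a) :
    cfilter p s = cfilter q s :=
  @Finset.filter_congr α p q (fun a => Classical.propDecidable (p a))
    (fun a => Classical.propDecidable (q a)) s h

lemma cfilter_card_mono {α : Type*} {p q : α → Prop} {s t : Finset α} (hst : s ⊆ t)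
    (h : ∀ a ∈ s, p a → q a) : (cfilter p s).card ≤ (cfilter q t).card := by
  apply Finset.card_le_card
  intro a ha
  rw [mem_cfilter] at ha ⊢
  exact ⟨hst ha.1, h a ha.1 ha.2⟩

/-! ### Pair counts over an index finset -/

variable {ι : Type*} [LinearOrder ι]

def pcount (s : Finset ι) (R : ι → ι → Prop) : ℕ :=
  (cfilter (fun p => p.1 < p.2 ∧ R p.1 p.2) (s ×ˢ s)).card

lemma pcount_le_choose (s : Finset ι) (R : ι → ι → Prop) :
    pcount s R ≤ s.card.choose 2 := by
  classical
  set T := cfilter (fun p => p.1 < p.2 ∧ R p.1 p.2) (s ×ˢ s) with hT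
  have hsub : T ⊆ s.offDiag := by
    intro p hp
    simp only [hT, mem_cfilter, mem_product] at hp
    simp [Finset.mem_offDiag, hp.1.1, hp.1.2, ne_of_lt hp.2.1]
  have hsub2 : T.image Prod.swap ⊆ s.offDiag := by
    intro p hp
    simp only [mem_image] at hp
    obtain ⟨q, hq, rfl⟩ := hp
    simp only [hT, mem_cfilter, mem_product] at hq
    simp [Finset.mem_offDiag, hq.1.1, hq.1.2, (ne_of_lt hq.2.1).symm]
  have hdisj : Disjoint T (T.image Prod.swap) := by
    rw [Finset.disjoint_left]
    intro p hp hp'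
    simp only [mem_image] at hp'
    obtain ⟨q, hq, rfl⟩ := hp'
    simp only [hT, mem_cfilter, mem_product] at hp hq
    exact absurd (hp.2.1.trans hq.2.1) (lt_irrefl _)
  have hinj : (T.image Prod.swap).card = T.card :=
    Finset.card_image_of_injective _ (Prod.swap_injective)
  have hcard : T.card + T.card ≤ s.offDiag.card := by
    calc T.card + T.card = (T ∪ T.image Prod.swap).card := by
          rw [Finset.card_union_of_disjoint hdisj, hinj]
      _ ≤ s.offDiag.card := Finset.card_le_card (Finset.union_subset hsub hsub2)
  rw [Finset.offDiag_card] at hcard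
  rw [Nat.choose_two_right]
  have hmm : s.card * (s.card - 1) = s.card * s.card - s.card := by
    rw [← Nat.mul_pred, Nat.pred_eq_sub_one]
  rw [hmm]
  have hpc : pcount s R = T.card := rfl
  omega

lemma pcount_erase (s : Finset ι) (R : ι → ι → Prop) (hR : ∀ i j, R i j → R j i)
    (i : ι) :
    pcount s R ≤ pcount (s.erase i) R + (cfilter (fun j => j ≠ i ∧ R i j) s).card := by
  classical
  set T := cfilter (fun p => p.1 < p.2 ∧ R p.1 p.2) (s ×ˢ s) with hT
  have hsplit : (cfilter (fun p => p.1 ≠ i ∧ p.2 ≠ i) T).card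
      + (cfilter (fun p => ¬(p.1 ≠ i ∧ p.2 ≠ i)) T).card = T.card := cfilter_card_add _ _
  have h1 : (cfilter (fun p => p.1 ≠ i ∧ p.2 ≠ i) T).card ≤ pcount (s.erase i) R := by
    apply Finset.card_le_card
    intro p hp
    simp only [hT, mem_cfilter, mem_product] at hp
    simp only [pcount, mem_cfilter, mem_product, Finset.mem_erase]
    exact ⟨⟨⟨hp.2.1, hp.1.1.1⟩, ⟨hp.2.2, hp.1.1.2⟩⟩, hp.1.2⟩
  have h2 : (cfilter (fun p => ¬(p.1 ≠ i ∧ p.2 ≠ i)) T).card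
      ≤ (cfilter (fun j => j ≠ i ∧ R i j) s).card := by
    apply Finset.card_le_card_of_injOn (fun p => if p.1 = i then p.2 else p.1)
    · intro p hp
      simp only [Finset.mem_coe, hT, mem_cfilter, mem_product, not_and, not_not, ne_eq] at hp
      obtain ⟨⟨⟨hp1s, hp2s⟩, hlt, hRp⟩, himp⟩ := hp
      show (if p.1 = i then p.2 else p.1) ∈ cfilter (fun j => j ≠ i ∧ R i j) s
      by_cases h : p.1 = i
      · rw [if_pos h]
        refine mem_cfilter.2 ⟨hp2s, fun he => ?_, h ▸ hRp⟩
        rw [h, he] at hlt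
        exact lt_irrefl _ hlt
      · rw [if_neg h]
        exact mem_cfilter.2 ⟨hp1s, h, hR _ _ ((himp h) ▸ hRp)⟩
    · intro p hp q hq heq
      dsimp only at heq
      simp only [Finset.mem_coe, hT, mem_cfilter, mem_product, not_and, not_not, ne_eq]
        at hp hq
      obtain ⟨⟨⟨hp1s, hp2s⟩, hplt, hpR⟩, hpimp⟩ := hp
      obtain ⟨⟨⟨hq1s, hq2s⟩, hqlt, hqR⟩, hqimp⟩ := hq
      by_cases h : p.1 = i <;> by_cases h' : q.1 = i
      · rw [if_pos h, if_pos h'] at heq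
        exact Prod.ext (h.trans h'.symm) heq
      · rw [if_pos h, if_neg h'] at heq
        have hq2 : q.2 = i := hqimp h'
        exfalso
        rw [h] at hplt; rw [hq2] at hqlt; rw [heq] at hplt
        exact absurd (hplt.trans hqlt) (lt_irrefl _)
      · rw [if_neg h, if_pos h'] at heq
        have hp2 : p.2 = i := hpimp h
        exfalso
        rw [hp2] at hplt; rw [h', ← heq] at hqlt
        exact absurd (hplt.trans hqlt) (lt_irrefl _)
      · rw [if_neg h, if_neg h'] at heq
        exact Prod.ext heq ((hpimp h).trans (hqimp h').symm)
  calc pcount s R = T.card := rfl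
    _ = _ + _ := hsplit.symm
    _ ≤ _ := Nat.add_le_add h1 h2

end
end BoxProof
namespace BoxProof
noncomputable section
open Finset

lemma card_eq_of_mem_iff {α : Type*} {s t : Finset α} (h : ∀ a, a ∈ s ↔ a ∈ t) :
    s.card = t.card := congrArg Finset.card (Finset.ext h)

def ncnt (m : ℕ) (R : ℕ → ℕ → Prop) : ℕ := pcount (range m) R

lemma ncnt_eq_sum (m : ℕ) (R : ℕ → ℕ → Prop) :
    ncnt m R = ∑ j ∈ range m, (cfilter (fun i => R i j) (range j)).card := by
  classical
  rw [ncnt, pcount, Finset.card_eq_sum_card_fiberwise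
    (f := Prod.snd) (t := range m) ?side]
  case side =>
    intro p hp
    simp only [Finset.mem_coe, mem_cfilter, mem_product] at hp
    exact hp.1.2
  refine Finset.sum_congr rfl fun j hj => ?_
  refine Finset.card_bij' (fun p _ => p.1) (fun i _ => (i, j)) ?_ ?_ ?_ ?_
  · intro p hp
    simp only [Finset.mem_filter, mem_cfilter, mem_product] at hp
    obtain ⟨⟨⟨h1, h2⟩, hlt, hRp⟩, hsnd⟩ := hp
    rw [hsnd] at hlt hRp
    simp only [mem_cfilter, mem_range]
    exact ⟨hlt, hRp⟩
  · intro i hi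
    simp only [mem_cfilter, mem_range] at hi
    have hj' := Finset.mem_range.1 hj
    exact Finset.mem_filter.2 ⟨mem_cfilter.2 ⟨Finset.mem_product.2
      ⟨Finset.mem_range.2 (hi.1.trans hj'), Finset.mem_range.2 hj'⟩, hi.1, hi.2⟩, rfl⟩
  · intro p hp
    simp only [Finset.mem_filter] at hp
    exact Prod.ext rfl hp.2.symm
  · intro i hi
    rfl

lemma count_mod_eq (d j : ℕ) :
    (cfilter (fun i => i % d = j % d) (range j)).card = j / d := by
  classical
  have h1 : (cfilter (fun i => i % d = j % d) (range j)).card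
      = ((Finset.Ioc 0 j).filter (d ∣ ·)).card := by
    refine Finset.card_bij' (fun i _ => j - i) (fun x _ => j - x) ?_ ?_ ?_ ?_
    · intro i hi
      simp only [mem_cfilter, mem_range] at hi
      simp only [Finset.mem_filter, Finset.mem_Ioc]
      refine ⟨⟨by omega, by omega⟩, ?_⟩
      exact (Nat.modEq_iff_dvd' (le_of_lt hi.1)).1 hi.2
    · intro x hx
      simp only [Finset.mem_filter, Finset.mem_Ioc] at hx
      simp only [mem_cfilter, mem_range]
      obtain ⟨⟨hx0, hxj⟩, hdvd⟩ := hx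
      refine ⟨by omega, ?_⟩
      have h : j - x ≤ j := Nat.sub_le _ _
      exact (Nat.modEq_iff_dvd' (n := d) h).2 (by rw [Nat.sub_sub_self hxj]; exact hdvd)
    · intro i hi
      simp only [mem_cfilter, mem_range] at hi
      exact Nat.sub_sub_self (le_of_lt hi.1)
    · intro x hx
      simp only [Finset.mem_filter, Finset.mem_Ioc] at hx
      exact Nat.sub_sub_self hx.1.2
  exact h1.trans (Nat.Ioc_filter_dvd_card_eq_div j d)

lemma count_nmod (d j : ℕ) :
    (cfilter (fun i => ¬ i % d = j % d) (range j)).card = j - j / d := by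
  have h := cfilter_card_add (fun i => i % d = j % d) (range j)
  rw [count_mod_eq, Finset.card_range] at h
  have := Nat.div_le_self j d
  omega

lemma double_count {α : Type*} [Fintype α] [LinearOrder α] (A : α → α → Prop)
    (hsym : ∀ i j, A i j → A j i) (hirr : ∀ i, ¬ A i i) :
    (cfilter (fun p : α × α => A p.1 p.2) univ).card = 2 * pcount univ A := by
  classical
  set S := cfilter (fun p : α × α => A p.1 p.2) univ with hS
  have hsplit : (cfilter (fun p : α × α => p.1 < p.2) S).card
      + (cfilter (fun p : α × α => ¬ p.1 < p.2) S).card = S.card := cfilter_card_add _ _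
  have h1 : (cfilter (fun p : α × α => p.1 < p.2) S).card = pcount univ A := by
    refine card_eq_of_mem_iff fun p => ?_
    simp only [hS, pcount, mem_cfilter, mem_product, mem_univ, true_and, and_comm]
  have h2 : (cfilter (fun p : α × α => ¬ p.1 < p.2) S).card
      = (cfilter (fun p : α × α => p.1 < p.2) S).card := by
    refine Finset.card_bij' (fun p _ => p.swap) (fun p _ => p.swap) ?_ ?_ ?_ ?_
    · intro p hp
      simp only [hS, mem_cfilter, mem_univ, true_and] at hp ⊢
      obtain ⟨hA, hnlt⟩ := hp
      refine ⟨hsym _ _ hA, ?_⟩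
      rcases lt_trichotomy p.1 p.2 with h | h | h
      · exact absurd h hnlt
      · exact absurd (h ▸ hA) (hirr _)
      · exact h
    · intro p hp
      simp only [hS, mem_cfilter, mem_univ, true_and] at hp ⊢
      exact ⟨hsym _ _ hp.1, not_lt_of_gt hp.2⟩
    · intro p _; exact Prod.swap_swap p
    · intro p _; exact Prod.swap_swap p
  omega

lemma pcount_fin_to_range (n : ℕ) (R : ℕ → ℕ → Prop) :
    pcount (univ : Finset (Fin n)) (fun v w : Fin n => R (v : ℕ) (w : ℕ)) = ncnt n R := by
  rw [pcount, ncnt, pcount]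
  refine Finset.card_bij' (fun p _ => ((p.1 : ℕ), (p.2 : ℕ)))
    (fun q hq => (⟨q.1, by
        simp only [mem_cfilter, mem_product, mem_range] at hq; exact hq.1.1⟩,
      ⟨q.2, by simp only [mem_cfilter, mem_product, mem_range] at hq; exact hq.1.2⟩)) ?_ ?_ ?_ ?_
  · intro p hp
    simp only [mem_cfilter, mem_product, mem_univ, mem_range, true_and] at hp ⊢
    exact ⟨⟨p.1.isLt, p.2.isLt⟩, hp⟩
  · intro q hq
    simp only [mem_cfilter, mem_product, mem_univ, mem_range, true_and] at hq ⊢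
    exact hq.2
  · intro p _; rfl
  · intro q hq
    simp only [mem_cfilter, mem_product, mem_range] at hq
    rfl

lemma turanEdges_eq_ncnt (m d : ℕ) :
    turanEdges m d = ncnt m (fun i j => ¬ i % d = j % d) := by
  classical
  have h2 := SimpleGraph.two_mul_card_edgeFinset (G := SimpleGraph.turanGraph m d)
  have hbridge : (Finset.univ.filter fun (x : Fin m × Fin m) =>
        (SimpleGraph.turanGraph m d).Adj x.1 x.2).card
      = (cfilter (fun p : Fin m × Fin m => ¬ ((p.1 : ℕ) % d = (p.2 : ℕ) % d)) univ).card := by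
    refine card_eq_of_mem_iff fun p => ?_
    simp only [Finset.mem_filter, mem_cfilter, mem_univ, true_and]
    exact Iff.rfl
  have hd := double_count (fun v w : Fin m => ¬ ((v : ℕ) % d = (w : ℕ) % d))
    (fun i j h he => h he.symm) (fun i h => h rfl)
  have htr := pcount_fin_to_range m (fun i j => ¬ i % d = j % d)
  have hbridge2 : (Finset.univ.filter fun (x : Fin m × Fin m) =>
        (SimpleGraph.turanGraph m d).Adj x.1 x.2).card
      = 2 * ncnt m (fun i j => ¬ i % d = j % d) := by
    rw [hbridge, hd, htr]
  have hfin : 2 * turanEdges m d = 2 * ncnt m (fun i j => ¬ i % d = j % d) := by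
    rw [turanEdges, h2, hbridge2]
  omega

lemma turan_sum (m d : ℕ) :
    turanEdges m d = ∑ j ∈ range m, (j - j / d) := by
  rw [turanEdges_eq_ncnt, ncnt_eq_sum]
  exact Finset.sum_congr rfl fun j _ => count_nmod d j

lemma same_sum (m d : ℕ) :
    ncnt m (fun i j => i % d = j % d) = ∑ j ∈ range m, j / d := by
  rw [ncnt_eq_sum]
  exact Finset.sum_congr rfl fun j _ => count_mod_eq d j

lemma all_sum (m : ℕ) : ncnt m (fun _ _ => True) = m.choose 2 := by
  rw [ncnt_eq_sum]
  have h1 : ∀ j ∈ range m, (cfilter (fun _ : ℕ => True) (range j)).card = j := by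
    intro j _
    rw [← Finset.card_range j]
    exact card_eq_of_mem_iff fun a => by simp
  rw [Finset.sum_congr rfl h1]
  have h2 := Finset.sum_range_id_mul_two m
  rw [Nat.choose_two_right]
  omega

lemma turan_add_same (m d : ℕ) :
    turanEdges m d + ncnt m (fun i j => i % d = j % d) = m.choose 2 := by
  rw [turan_sum, same_sum, ← Finset.sum_add_distrib, ← all_sum m, ncnt_eq_sum]
  refine Finset.sum_congr rfl fun j _ => ?_
  have h1 : (cfilter (fun _ : ℕ => True) (range j)).card = j := by
    rw [← Finset.card_range j]
    exact card_eq_of_mem_iff fun a => by simp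
  rw [h1]
  have := Nat.div_le_self j d
  omega

lemma turan_recurrence (m d : ℕ) :
    turanEdges (m + 1) d = turanEdges m d + (m - m / d) := by
  rw [turan_sum, turan_sum, Finset.sum_range_succ]

end
end BoxProof
namespace BoxProof
noncomputable section
open Finset

variable {ι : Type*} {d : ℕ}

def Mem (a b : ι → Fin d → ℝ) (x : Fin d → ℝ) (i : ι) : Prop :=
  ∀ c, a i c ≤ x c ∧ x c ≤ b i c

def Dis (a b : ι → Fin d → ℝ) (i j : ι) : Prop :=
  ∃ c, b i c < a j c ∨ b j c < a i c

lemma dis_symm (a b : ι → Fin d → ℝ) (i j : ι) (h : Dis a b i j) : Dis a b j i := by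
  obtain ⟨c, h⟩ := h; exact ⟨c, h.symm⟩

lemma dis_irrefl (a b : ι → Fin d → ℝ) (hab : ∀ i c, a i c ≤ b i c) (i : ι) :
    ¬ Dis a b i i := by
  rintro ⟨c, h | h⟩ <;> exact absurd h (not_lt.2 (hab i c))

lemma key (a b : ι → Fin d → ℝ) (hab : ∀ i c, a i c ≤ b i c) (k : ℕ) :
    ∀ (t : ℕ) (C : Finset (Fin d)), C.card = t → C.Nonempty →
    ∀ (s : Finset ι), s.Nonempty →
    ∀ (x₀ : Fin d → ℝ), (∀ i ∈ s, ∀ c, c ∉ C → a i c ≤ x₀ c ∧ x₀ c ≤ b i c) →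
    (∀ x : Fin d → ℝ, (cfilter (fun i => Mem a b x i) s).card ≤ k) →
    ∃ i ∈ s, s.card + C.card ≤
      k + C.card * (1 + (cfilter (fun j => j ≠ i ∧ Dis a b i j) s).card) := by
  intro t
  induction t using Nat.strong_induction_on with
  | _ t ih =>
  intro C hCt hCne s hsne x₀ hx₀ hdepth
  obtain ⟨c, hcC⟩ := hCne
  obtain ⟨i, his, hmin⟩ := Finset.exists_min_image s (fun j => b j c) hsne
  by_cases hbase : C.card = 1
  · -- base case : one coordinate left
    have hCeq : C = {c} := by
      obtain ⟨e, he⟩ := Finset.card_eq_one.1 hbase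
      rw [he] at hcC ⊢
      rw [Finset.mem_singleton] at hcC
      rw [hcC]
    set y : Fin d → ℝ := Function.update x₀ c (b i c) with hy
    have hsubT : ∀ j ∈ s, (a j c ≤ b i c ∧ b i c ≤ b j c) → Mem a b y j := by
      intro j hjs hj c'
      by_cases h : c' = c
      · subst h; rw [hy, Function.update_self]; exact ⟨hj.1, hj.2⟩
      · rw [hy, Function.update_of_ne h]
        exact hx₀ j hjs c' (by rw [hCeq, Finset.mem_singleton]; exact h)
    have hTsub : (cfilter (fun j => a j c ≤ b i c ∧ b i c ≤ b j c) s).card ≤ k :=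
      le_trans (cfilter_card_mono (Finset.Subset.refl s) hsubT) (hdepth y)
    have hsplit := cfilter_card_add (fun j => a j c ≤ b i c ∧ b i c ≤ b j c) s
    have hsub2 : (cfilter (fun j => ¬(a j c ≤ b i c ∧ b i c ≤ b j c)) s).card
        ≤ (cfilter (fun j => j ≠ i ∧ Dis a b i j) s).card := by
      apply Finset.card_le_card
      intro j hj
      rw [mem_cfilter] at hj ⊢
      obtain ⟨hjs, hjn⟩ := hj
      have hbj : b i c ≤ b j c := hmin j hjs
      have haj : b i c < a j c := by
        by_contra h
        exact hjn ⟨not_lt.1 h, hbj⟩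
      refine ⟨hjs, ?_, ⟨c, Or.inl haj⟩⟩
      intro hji
      rw [hji] at haj
      exact absurd haj (not_lt.2 (hab i c))
    refine ⟨i, his, ?_⟩
    rw [hbase, one_mul]
    omega
  · -- inductive step
    have hC2 : 2 ≤ C.card := by
      have := Finset.card_pos.2 ⟨c, hcC⟩
      omega
    set N := cfilter (fun j => ¬ Dis a b i j) s with hN
    have hiN : i ∈ N := by
      rw [hN, mem_cfilter]
      exact ⟨his, dis_irrefl a b hab i⟩
    have hNs : N ⊆ s := cfilter_subset _ _
    have hint : ∀ j ∈ N, a j c ≤ b i c ∧ b i c ≤ b j c := by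
      intro j hjN
      have hjN' := hjN
      rw [hN, mem_cfilter] at hjN'
      obtain ⟨hjs, hnd⟩ := hjN'
      rw [Dis] at hnd
      push_neg at hnd
      exact ⟨(hnd c).1, hmin j hjs⟩
    set cnti := (cfilter (fun j => j ≠ i ∧ Dis a b i j) s).card with hcntidef
    have hcnti : s.card ≤ N.card + cnti := by
      have hsplit : N.card + (cfilter (fun j => ¬¬ Dis a b i j) s).card = s.card := by
        rw [hN]
        exact cfilter_card_add _ _
      have hsub : (cfilter (fun j => ¬¬ Dis a b i j) s).card ≤ cnti := by
        rw [hcntidef]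
        apply Finset.card_le_card
        intro j hj
        rw [mem_cfilter] at hj ⊢
        have hd2 := not_not.1 hj.2
        refine ⟨hj.1, ?_, hd2⟩
        intro hji
        rw [hji] at hd2
        exact dis_irrefl a b hab i hd2
      omega
    by_cases hdone : s.card + C.card ≤ k + C.card * (1 + cnti)
    · exact ⟨i, his, hdone⟩
    · have hC'card : (C.erase c).card = C.card - 1 := Finset.card_erase_of_mem hcC
      have hC'ne : (C.erase c).Nonempty := Finset.card_pos.1 (by omega)
      have hNne : N.Nonempty := ⟨i, hiN⟩
      have hx₀' : ∀ j ∈ N, ∀ c', c' ∉ C.erase c →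
          a j c' ≤ Function.update x₀ c (b i c) c' ∧
            Function.update x₀ c (b i c) c' ≤ b j c' := by
        intro j hjN c' hc'
        by_cases h : c' = c
        · subst h; rw [Function.update_self]; exact hint j hjN
        · rw [Function.update_of_ne h]
          exact hx₀ j (hNs hjN) c' (fun hcC' => hc' (Finset.mem_erase.2 ⟨h, hcC'⟩))
      have hdepth' : ∀ x, (cfilter (fun i' => Mem a b x i') N).card ≤ k :=
        fun x => le_trans (cfilter_card_mono hNs (fun _ _ h => h)) (hdepth x)
      obtain ⟨j, hjN, hj⟩ := ih (C.erase c).card (by omega) (C.erase c) rfl hC'ne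
        N hNne _ hx₀' hdepth'
      refine ⟨j, hNs hjN, ?_⟩
      rw [hC'card] at hj
      set cntj' := (cfilter (fun j' => j' ≠ j ∧ Dis a b j j') N).card with hcntj'def
      set cntj := (cfilter (fun j' => j' ≠ j ∧ Dis a b j j') s).card with hcntjdef
      have hjj : cntj' ≤ cntj := cfilter_card_mono hNs (fun _ _ h => h)
      -- arithmetic
      set c0 := C.card with hc0
      set g := c0 - 1 with hgdef
      have hg : c0 = g + 1 := by omega
      have hA' : k + c0 * (1 + cnti) < s.card + c0 := not_le.1 hdone
      have e2 : c0 * (1 + cnti) = g + 1 + (g * cnti + cnti) := by rw [hg]; ring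
      have hA2 : k + g * cnti + cnti < s.card := by
        rw [e2] at hA'
        linarith
      have e1 : g * (1 + cntj') = g + g * cntj' := by ring
      have hN2 : N.card ≤ k + g * cntj' := by
        rw [e1] at hj
        linarith
      have hmul : g * cnti < g * cntj' := by linarith
      have hlt : cnti < cntj' := lt_of_mul_lt_mul_left hmul (Nat.zero_le g)
      have e3 : c0 * (1 + cntj) = g + 1 + (g * cntj + cntj) := by rw [hg]; ring
      have hmono : g * cntj' ≤ g * cntj := Nat.mul_le_mul_left g hjj
      rw [e3]
      linarith
end
end BoxProof
namespace BoxProof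
noncomputable section
open Finset

variable {ι : Type*} [LinearOrder ι] {d : ℕ}

def Inter (a b : ι → Fin d → ℝ) (i j : ι) : Prop :=
  ∃ x, Mem a b x i ∧ Mem a b x j

lemma inter_symm (a b : ι → Fin d → ℝ) (i j : ι) (h : Inter a b i j) : Inter a b j i := by
  obtain ⟨x, h1, h2⟩ := h; exact ⟨x, h2, h1⟩

lemma dis_not_inter (a b : ι → Fin d → ℝ) (i j : ι) (hdis : Dis a b i j) :
    ¬ Inter a b i j := by
  rintro ⟨x, h1, h2⟩
  obtain ⟨c, hc | hc⟩ := hdis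
  · exact absurd ((h1 c).2.trans_lt (hc.trans_le (h2 c).1)) (lt_irrefl _)
  · exact absurd ((h2 c).2.trans_lt (hc.trans_le (h1 c).1)) (lt_irrefl _)

lemma choose2_succ (N : ℕ) : (N+1).choose 2 = N.choose 2 + N := by
  rw [Nat.choose_succ_succ N 1, Nat.choose_one_right, Nat.add_comm]

lemma UB (k : ℕ) (hdk : d < k) (hd : 1 ≤ d)
    (a b : ι → Fin d → ℝ) (hab : ∀ i c, a i c ≤ b i c) :
    ∀ (n : ℕ) (s : Finset ι), s.card = n →
    (∀ x : Fin d → ℝ, (cfilter (fun i => Mem a b x i) s).card ≤ k) →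
    pcount s (Inter a b) ≤
      turanEdges (n - k + d) d + (n.choose 2 - (n - k + d).choose 2) := by
  intro n
  induction n using Nat.strong_induction_on with
  | _ n ih =>
  intro s hsc hdepth
  by_cases hnk : n ≤ k
  · have h1 : pcount s (Inter a b) ≤ n.choose 2 := hsc ▸ pcount_le_choose s _
    have hm : n - k + d = d := by omega
    rw [hm]
    have hz : ncnt d (fun i j => i % d = j % d) = 0 := by
      rw [same_sum]
      exact Finset.sum_eq_zero fun j hj => Nat.div_eq_of_lt (Finset.mem_range.1 hj)
    have ht : turanEdges d d = d.choose 2 := by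
      have := turan_add_same d d
      omega
    rw [ht]
    omega
  · have hsne : s.Nonempty := by
      rw [← Finset.card_pos, hsc]; omega
    have hCcard : (univ : Finset (Fin d)).card = d := by
      rw [Finset.card_univ, Fintype.card_fin]
    have hCne : (univ : Finset (Fin d)).Nonempty := ⟨⟨0, hd⟩, mem_univ _⟩
    obtain ⟨i, his, hkey⟩ := key a b hab k ((univ : Finset (Fin d)).card) univ rfl hCne
      s hsne (fun _ => 0) (fun i hi c hc => absurd (mem_univ c) hc) hdepth
    rw [hCcard, hsc] at hkey
    set cnt := (cfilter (fun j => j ≠ i ∧ Dis a b i j) s).card with hcntdef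
    have hsplit := pcount_erase s (Inter a b) (inter_symm a b) i
    set deg := (cfilter (fun j => j ≠ i ∧ Inter a b i j) s).card with hdegdef
    have hdc : deg + cnt ≤ n - 1 := by
      have hdisj : Disjoint (cfilter (fun j => j ≠ i ∧ Inter a b i j) s)
          (cfilter (fun j => j ≠ i ∧ Dis a b i j) s) := by
        rw [Finset.disjoint_left]
        intro j hj hj'
        rw [mem_cfilter] at hj hj'
        exact dis_not_inter a b i j hj'.2.2 hj.2.2
      have hsub : (cfilter (fun j => j ≠ i ∧ Inter a b i j) s)
          ∪ (cfilter (fun j => j ≠ i ∧ Dis a b i j) s) ⊆ s.erase i := by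
        intro j hj
        rcases Finset.mem_union.1 hj with h | h <;>
          (rw [mem_cfilter] at h; exact Finset.mem_erase.2 ⟨h.2.1, h.1⟩)
      have hu := Finset.card_union_of_disjoint hdisj
      have h2 := Finset.card_le_card hsub
      rw [hu] at h2
      rw [Finset.card_erase_of_mem his, hsc] at h2
      exact h2
    have hec : (s.erase i).card = n - 1 := by
      rw [Finset.card_erase_of_mem his, hsc]
    have hih := ih (n-1) (by omega) (s.erase i) hec
      (fun x => le_trans (cfilter_card_mono (Finset.erase_subset i s) (fun _ _ h => h))
        (hdepth x))
    set m := n - k + d with hm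
    have hm1 : d + 1 ≤ m := by omega
    set q := (m-1)/d with hqdef
    have hq : d * q + (m-1) % d = m - 1 := by rw [hqdef]; exact Nat.div_add_mod _ _
    have hr : (m-1) % d < d := Nat.mod_lt _ (by omega)
    have hqcnt : q ≤ cnt := by
      have h1 : d * q ≤ m - 1 := by omega
      have h2 : m ≤ d * (1 + cnt) := by
        have e : d * (1 + cnt) = d + d * cnt := by ring
        omega
      have h3 : d * q < d * (1 + cnt) := by omega
      have h4 := lt_of_mul_lt_mul_left h3 (Nat.zero_le d)
      omega
    have hqm : q ≤ m - 1 := by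
      have h1 : d * q ≤ m - 1 := by omega
      have : q ≤ d * q := Nat.le_mul_of_pos_left q (by omega)
      omega
    have htrec : turanEdges m d = turanEdges (m-1) d + ((m-1) - q) := by
      have h0 := turan_recurrence (m-1) d
      have hm2 : m - 1 + 1 = m := by omega
      rw [hm2] at h0
      rw [h0, hqdef]
    have hch1 : n.choose 2 = (n-1).choose 2 + (n-1) := by
      conv_lhs => rw [show n = (n-1)+1 by omega]
      exact choose2_succ (n-1)
    have hch2 : m.choose 2 = (m-1).choose 2 + (m-1) := by
      conv_lhs => rw [show m = (m-1)+1 by omega]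
      exact choose2_succ (m-1)
    have hchmono : (m-1).choose 2 ≤ (n-1).choose 2 := Nat.choose_le_choose 2 (by omega)
    have hchmono2 : m.choose 2 ≤ n.choose 2 := Nat.choose_le_choose 2 (by omega)
    have hmm : (n-1) - k + d = m - 1 := by omega
    rw [hmm] at hih
    have hdeg2 : deg ≤ (n-1) - q := by omega
    have hstep : pcount s (Inter a b)
        ≤ turanEdges (m-1) d + ((n-1).choose 2 - (m-1).choose 2) + deg := by omega
    omega

end
end BoxProof
namespace BoxProof
noncomputable section
open Finset

lemma pcount_congr {ι : Type*} [LinearOrder ι] (s : Finset ι) (R R' : ι → ι → Prop)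
    (h : ∀ i ∈ s, ∀ j ∈ s, i < j → (R i j ↔ R' i j)) : pcount s R = pcount s R' := by
  rw [pcount, pcount]
  apply congrArg Finset.card
  apply cfilter_congr
  intro p hp
  rw [Finset.mem_product] at hp
  exact and_congr_right fun hlt => h _ hp.1 _ hp.2 hlt

lemma pcount_split {ι : Type*} [LinearOrder ι] (s : Finset ι) (R : ι → ι → Prop) :
    pcount s R + pcount s (fun i j => ¬ R i j) = pcount s (fun _ _ => True) := by
  have h := cfilter_card_add (fun p : ι × ι => R p.1 p.2)
    (cfilter (fun p : ι × ι => p.1 < p.2 ∧ True) (s ×ˢ s))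
  have e1 : (cfilter (fun p : ι × ι => R p.1 p.2)
      (cfilter (fun p : ι × ι => p.1 < p.2 ∧ True) (s ×ˢ s)))
      = cfilter (fun p : ι × ι => p.1 < p.2 ∧ R p.1 p.2) (s ×ˢ s) := by
    apply Finset.ext
    intro p
    simp only [mem_cfilter, and_true]
    tauto
  have e2 : (cfilter (fun p : ι × ι => ¬ R p.1 p.2)
      (cfilter (fun p : ι × ι => p.1 < p.2 ∧ True) (s ×ˢ s)))
      = cfilter (fun p : ι × ι => p.1 < p.2 ∧ ¬ R p.1 p.2) (s ×ˢ s) := by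
    apply Finset.ext
    intro p
    simp only [mem_cfilter, and_true]
    tauto
  rw [e1, e2] at h
  exact h

lemma mem_box_iff {n d : ℕ} (a b : Fin n → Fin d → ℝ) (x : Fin d → ℝ) (i : Fin n) :
    x ∈ Set.pi Set.univ (fun c => Set.Icc (a i c) (b i c)) ↔ Mem a b x i := by
  simp only [Set.mem_pi, Set.mem_univ, true_implies, Set.mem_Icc, Mem]

lemma interPairs_eq_pcount {n d : ℕ} (a b : Fin n → Fin d → ℝ)
    (B : Fin n → Set (Fin d → ℝ))
    (hB : ∀ i, B i = Set.pi Set.univ fun c => Set.Icc (a i c) (b i c)) :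
    interPairs B = pcount (univ : Finset (Fin n)) (Inter a b) := by
  rw [interPairs]
  have hset : {p : Fin n × Fin n | p.1 < p.2 ∧ (B p.1 ∩ B p.2).Nonempty}
      = ↑(cfilter (fun p : Fin n × Fin n => p.1 < p.2 ∧ Inter a b p.1 p.2)
          ((univ : Finset (Fin n)) ×ˢ univ)) := by
    ext p
    simp only [Set.mem_setOf_eq, Finset.mem_coe, mem_cfilter, Finset.mem_product,
      Finset.mem_univ, true_and]
    apply and_congr_right
    intro _
    constructor
    · rintro ⟨x, hx1, hx2⟩
      rw [hB p.1, mem_box_iff] at hx1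
      rw [hB p.2, mem_box_iff] at hx2
      exact ⟨x, hx1, hx2⟩
    · rintro ⟨x, hx1, hx2⟩
      refine ⟨x, ?_, ?_⟩
      · rw [hB p.1, mem_box_iff]; exact hx1
      · rw [hB p.2, mem_box_iff]; exact hx2
  rw [hset, Set.ncard_coe_finset]
  rfl

lemma depth_translate {n d : ℕ} (a b : Fin n → Fin d → ℝ)
    (B : Fin n → Set (Fin d → ℝ))
    (hB : ∀ i, B i = Set.pi Set.univ fun c => Set.Icc (a i c) (b i c))
    (x : Fin d → ℝ) :
    Set.ncard {i | x ∈ B i}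
      = (cfilter (fun i => Mem a b x i) (univ : Finset (Fin n))).card := by
  have hset : {i : Fin n | x ∈ B i}
      = ↑(cfilter (fun i => Mem a b x i) (univ : Finset (Fin n))) := by
    ext i
    simp only [Set.mem_setOf_eq, Finset.mem_coe, mem_cfilter, Finset.mem_univ, true_and]
    rw [hB i, mem_box_iff]
  rw [hset, Set.ncard_coe_finset]

end
end BoxProof
namespace BoxProof
noncomputable section
open Finset

lemma construction (n k d : ℕ) (hkn : k ≤ n) (hdk : d < k) (hd : 1 ≤ d) :
    ∃ B : Fin n → Set (Fin d → ℝ), (∀ i, IsBox (B i)) ∧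
      (∀ x : Fin d → ℝ, Set.ncard {i | x ∈ B i} ≤ k) ∧
      interPairs B =
        turanEdges (n - k + d) d + (Nat.choose n 2 - Nat.choose (n - k + d) 2) := by
  classical
  set m := n - k + d with hm
  have hmn : m ≤ n := by omega
  have hdpos : 0 < d := hd
  set A : Fin n → Fin d → ℝ := fun i c =>
    if (i:ℕ) < m ∧ (c:ℕ) = (i:ℕ) % d then (3*(i:ℕ) : ℝ) else 0 with hA
  set Bb : Fin n → Fin d → ℝ := fun i c =>
    if (i:ℕ) < m ∧ (c:ℕ) = (i:ℕ) % d then (3*(i:ℕ)+1 : ℝ) else (3*(n:ℕ)+1 : ℝ) with hB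
  have hab : ∀ i c, A i c ≤ Bb i c := by
    intro i c
    rw [hA, hB]
    dsimp only
    split_ifs with h
    · linarith
    · positivity
  refine ⟨fun i => Set.pi Set.univ (fun c => Set.Icc (A i c) (Bb i c)),
    fun i => ⟨A i, Bb i, hab i, rfl⟩, ?_, ?_⟩
  · -- depth condition
    intro x
    rw [depth_translate A Bb _ (fun i => rfl) x]
    set S := cfilter (fun i => Mem A Bb x i) (univ : Finset (Fin n)) with hS
    have hsplit : (cfilter (fun i : Fin n => (i:ℕ) < m) S).card
        + (cfilter (fun i : Fin n => ¬ (i:ℕ) < m) S).card = S.card := cfilter_card_add _ _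
    have hbig : (cfilter (fun i : Fin n => ¬ (i:ℕ) < m) S).card ≤ n - m := by
      have h1 : (cfilter (fun i : Fin n => ¬ (i:ℕ) < m) S).card ≤ (Finset.Ico m n).card := by
        refine Finset.card_le_card_of_injOn (fun i => (i:ℕ)) ?_ ?_
        · intro i hi
          rw [Finset.mem_coe, mem_cfilter] at hi
          exact Finset.mem_Ico.2 ⟨not_lt.1 hi.2, i.isLt⟩
        · intro i _ j _ h
          exact Fin.ext h
      rw [Nat.card_Ico] at h1
      exact h1
    have hsmall : (cfilter (fun i : Fin n => (i:ℕ) < m) S).card ≤ d := by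
      have h1 : (cfilter (fun i : Fin n => (i:ℕ) < m) S).card
          ≤ (univ : Finset (Fin d)).card := by
        refine Finset.card_le_card_of_injOn
          (fun i => (⟨(i:ℕ) % d, Nat.mod_lt _ hdpos⟩ : Fin d))
          (fun _ _ => mem_univ _) ?_
        intro i hi j hj hij
        rw [Finset.mem_coe, mem_cfilter] at hi hj
        obtain ⟨hiS, him⟩ := hi
        obtain ⟨hjS, hjm⟩ := hj
        rw [hS, mem_cfilter] at hiS hjS
        have hclseq : (i:ℕ) % d = (j:ℕ) % d := congrArg Fin.val hij
        set c0 : Fin d := ⟨(i:ℕ) % d, Nat.mod_lt _ hdpos⟩ with hc0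
        have hxi := hiS.2 c0
        have hxj := hjS.2 c0
        have hAi : A i c0 = 3*(i:ℕ) := by
          rw [hA]; dsimp only; rw [if_pos ⟨him, rfl⟩]
        have hBi : Bb i c0 = 3*(i:ℕ)+1 := by
          rw [hB]; dsimp only; rw [if_pos ⟨him, rfl⟩]
        have hc0j : (c0:ℕ) = (j:ℕ) % d := by rw [hc0]; exact hclseq
        have hAj : A j c0 = 3*(j:ℕ) := by
          rw [hA]; dsimp only; rw [if_pos ⟨hjm, hc0j⟩]
        have hBj : Bb j c0 = 3*(j:ℕ)+1 := by
          rw [hB]; dsimp only; rw [if_pos ⟨hjm, hc0j⟩]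
        rw [hAi, hBi] at hxi
        rw [hAj, hBj] at hxj
        have h1 : (3*(i:ℕ) : ℝ) ≤ 3*(j:ℕ)+1 := le_trans hxi.1 hxj.2
        have h2 : (3*(j:ℕ) : ℝ) ≤ 3*(i:ℕ)+1 := le_trans hxj.1 hxi.2
        have h1' : 3*(i:ℕ) ≤ 3*(j:ℕ)+1 := by exact_mod_cast h1
        have h2' : 3*(j:ℕ) ≤ 3*(i:ℕ)+1 := by exact_mod_cast h2
        exact Fin.ext (by omega)
      rw [Finset.card_univ, Fintype.card_fin] at h1
      exact h1
    omega
  · -- edge count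
    rw [interPairs_eq_pcount A Bb _ (fun i => rfl)]
    have hcongr : pcount (univ : Finset (Fin n)) (Inter A Bb)
        = pcount (univ : Finset (Fin n))
          (fun v w : Fin n => ¬((v:ℕ) < m ∧ (w:ℕ) < m ∧ (v:ℕ) % d = (w:ℕ) % d)) := by
      apply pcount_congr
      intro i _ j _ hlt
      have hij : (i:ℕ) < (j:ℕ) := hlt
      constructor
      · intro hint
        rintro ⟨him, hjm, hcls⟩
        refine dis_not_inter A Bb i j ⟨⟨(i:ℕ) % d, Nat.mod_lt _ hdpos⟩, Or.inl ?_⟩ hint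
        have hBi : Bb i ⟨(i:ℕ) % d, Nat.mod_lt _ hdpos⟩ = 3*(i:ℕ)+1 := by
          rw [hB]; dsimp only; rw [if_pos ⟨him, rfl⟩]
        have hAj : A j ⟨(i:ℕ) % d, Nat.mod_lt _ hdpos⟩ = 3*(j:ℕ) := by
          rw [hA]; dsimp only; rw [if_pos ⟨hjm, hcls⟩]
        rw [hBi, hAj]
        have hij1 : (i:ℕ) + 1 ≤ (j:ℕ) := hij
        have : ((i:ℕ) : ℝ) + 1 ≤ ((j:ℕ) : ℝ) := by exact_mod_cast hij1
        linarith
      · intro hnot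
        set x : Fin d → ℝ := fun c =>
          if (i:ℕ) < m ∧ (c:ℕ) = (i:ℕ) % d then (3*(i:ℕ):ℝ)
          else if (j:ℕ) < m ∧ (c:ℕ) = (j:ℕ) % d then (3*(j:ℕ):ℝ) else 0 with hx
        have hin : ((i:ℕ):ℝ) < ((n:ℕ):ℝ) := by exact_mod_cast i.isLt
        have hjn : ((j:ℕ):ℝ) < ((n:ℕ):ℝ) := by exact_mod_cast j.isLt
        refine ⟨x, ?_, ?_⟩
        · intro c
          rw [hA, hB, hx]
          dsimp only
          by_cases h1 : (i:ℕ) < m ∧ (c:ℕ) = (i:ℕ) % d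
          · rw [if_pos h1, if_pos h1, if_pos h1]
            exact ⟨le_refl _, by linarith⟩
          · rw [if_neg h1, if_neg h1, if_neg h1]
            by_cases h2 : (j:ℕ) < m ∧ (c:ℕ) = (j:ℕ) % d
            · rw [if_pos h2]
              constructor
              · positivity
              · linarith
            · rw [if_neg h2]
              constructor
              · exact le_refl _
              · positivity
        · intro c
          rw [hA, hB, hx]
          dsimp only
          by_cases h2 : (j:ℕ) < m ∧ (c:ℕ) = (j:ℕ) % d
          · have h1 : ¬((i:ℕ) < m ∧ (c:ℕ) = (i:ℕ) % d) := by
              rintro ⟨him, hci⟩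
              exact hnot ⟨him, h2.1, hci.symm.trans h2.2⟩
            rw [if_pos h2, if_neg h1, if_pos h2]
            exact ⟨le_refl _, by linarith⟩
          · rw [if_neg h2, if_neg h2]
            by_cases h1 : (i:ℕ) < m ∧ (c:ℕ) = (i:ℕ) % d
            · rw [if_pos h1]
              constructor
              · positivity
              · linarith
            · rw [if_neg h1]
              constructor
              · exact le_refl _
              · positivity
    rw [hcongr]
    have hft := pcount_fin_to_range n
      (fun i j => ¬(i < m ∧ j < m ∧ i % d = j % d))
    rw [hft]
    have hsplit := pcount_split (range n) (fun i j => i < m ∧ j < m ∧ i % d = j % d)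
    have hrestrict : ncnt n (fun i j => i < m ∧ j < m ∧ i % d = j % d)
        = ncnt m (fun i j => i % d = j % d) := by
      rw [ncnt, ncnt, pcount, pcount]
      apply card_eq_of_mem_iff
      intro p
      simp only [mem_cfilter, Finset.mem_product, Finset.mem_range]
      constructor
      · rintro ⟨⟨h1, h2⟩, hlt, hm1, hm2, hsame⟩
        exact ⟨⟨hm1, hm2⟩, hlt, hsame⟩
      · rintro ⟨⟨h1, h2⟩, hlt, hsame⟩
        exact ⟨⟨lt_of_lt_of_le h1 hmn, lt_of_lt_of_le h2 hmn⟩, hlt, h1, h2, hsame⟩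
    have htas := turan_add_same m d
    have hall := all_sum n
    have hcm : m.choose 2 ≤ n.choose 2 := Nat.choose_le_choose 2 hmn
    have hsn : ncnt n (fun i j => i < m ∧ j < m ∧ i % d = j % d)
        + ncnt n (fun i j => ¬(i < m ∧ j < m ∧ i % d = j % d)) = n.choose 2 := by
      rw [← hall]
      exact hsplit
    rw [hrestrict] at hsn
    omega

end
end BoxProof

/-- For `n ≥ k > d ≥ 1`, the maximal number of intersecting pairs in a family of `n`
axis-parallel boxes in `ℝ^d`, no `k+1` of which have a common point, equals
`t(n-k+d, d) + (C(n,2) - C(n-k+d, 2))`: it is an upper bound for every such family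
and it is attained by some such family. -/
theorem boxes_extremal (n k d : ℕ) (hkn : k ≤ n) (hdk : d < k) (hd : 1 ≤ d) :
    (∀ B : Fin n → Set (Fin d → ℝ), (∀ i, IsBox (B i)) →
        (∀ x : Fin d → ℝ, Set.ncard {i | x ∈ B i} ≤ k) →
        interPairs B ≤
          turanEdges (n - k + d) d + (Nat.choose n 2 - Nat.choose (n - k + d) 2)) ∧
    (∃ B : Fin n → Set (Fin d → ℝ), (∀ i, IsBox (B i)) ∧
        (∀ x : Fin d → ℝ, Set.ncard {i | x ∈ B i} ≤ k) ∧
        interPairs B =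
          turanEdges (n - k + d) d + (Nat.choose n 2 - Nat.choose (n - k + d) 2)) := by
  constructor
  · intro B hbox hdepth
    choose a b hab hBeq using hbox
    rw [BoxProof.interPairs_eq_pcount a b B hBeq]
    have hdepth' : ∀ x : Fin d → ℝ,
        (BoxProof.cfilter (fun i => BoxProof.Mem a b x i) (Finset.univ : Finset (Fin n))).card ≤ k := by
      intro x
      rw [← BoxProof.depth_translate a b B hBeq x]
      exact hdepth x
    have hcard : (Finset.univ : Finset (Fin n)).card = n := by
      rw [Finset.card_univ, Fintype.card_fin]
    exact BoxProof.UB k hdk hd a b hab n Finset.univ hcard hdepth'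
  · exact BoxProof.construction n k d hkn hdk hd
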